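/- Let |·| be a norm on ℝ^N. For every ε > 0 there exists δ > 0 such that for every a* in the unit sphere of (ℝ^N)* there exists b* in the unit sphere of (ℝ^N)* satisfying: (1) dist(a, F(b*)) < ε for every a in the unit sphere of ℝ^N with a*(a) > 1 − δ, where F(b*) = { y in the unit sphere of ℝ^N : b*(y) = 1 }; and (2) b*(e_i) = 0 for every i ≤ N such that a*(e_i) = 0, where e_i are the canonical basis vectors of ℝ^N. -/

import Mathlib

/-- `f` is a norm on `ℝ^N`. -/
def IsNormOn {N : ℕ} (f : (Fin N → ℝ) → ℝ) : Prop :=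
  (∀ x, f x = 0 ↔ x = 0) ∧
  (∀ (a : ℝ) (x), f (a • x) = |a| * f x) ∧
  (∀ x y, f (x + y) ≤ f x + f y)

/-- `f` is absolute: it only depends on the absolute values of the coordinates. -/
def IsAbsoluteNorm {N : ℕ} (f : (Fin N → ℝ) → ℝ) : Prop :=
  ∀ x, f x = f (fun i => |x i|)

/-- `f` is normalized: it takes the value `1` at each canonical basis vector. -/
def IsNormalizedNorm {N : ℕ} (f : (Fin N → ℝ) → ℝ) : Prop :=
  ∀ i, f (Pi.single i 1) = 1


/-- The dual norm, with respect to the norm `f` on `ℝ^N`, of a linear functional `φ`: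
the supremum of `|φ x|` over the `f`-unit ball. -/
noncomputable def dualNormF {N : ℕ} (f : (Fin N → ℝ) → ℝ)
    (φ : (Fin N → ℝ) →ₗ[ℝ] ℝ) : ℝ :=
  sSup {s : ℝ | ∃ x, f x ≤ 1 ∧ s = |φ x|}


section Aux
open Filter
variable {N : ℕ} {f : (Fin N → ℝ) → ℝ}

variable {N : ℕ} {f : (Fin N → ℝ) → ℝ}

lemma fzero (h : IsNormOn f) : f 0 = 0 := (h.1 0).mpr rfl

lemma fneg (h : IsNormOn f) (x : Fin N → ℝ) : f (-x) = f x := by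
  have := h.2.1 (-1) x; simpa using this

lemma fnonneg (h : IsNormOn f) (x : Fin N → ℝ) : 0 ≤ f x := by
  have h0 : f (x + -x) ≤ f x + f (-x) := h.2.2 x (-x)
  rw [add_neg_cancel, fzero h, fneg h] at h0; linarith

lemma fsum_le (h : IsNormOn f) {ι : Type*} (s : Finset ι) (g : ι → (Fin N → ℝ)) :
    f (∑ i ∈ s, g i) ≤ ∑ i ∈ s, f (g i) := by
  classical
  induction s using Finset.induction_on with
  | empty => simp [fzero h]
  | insert _ _ hx ih =>
      rename_i a s
      rw [Finset.sum_insert hx, Finset.sum_insert hx]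
      exact le_trans (h.2.2 _ _) (by linarith)

lemma f_le_norm (h : IsNormOn f) (x : Fin N → ℝ) :
    f x ≤ (∑ i, f (Pi.single i 1)) * ‖x‖ := by
  classical
  have hx : x = ∑ i, x i • (Pi.single i 1 : Fin N → ℝ) := by
    conv_lhs => rw [← Finset.univ_sum_single x]
    congr 1; funext i
    funext j
    rcases eq_or_ne j i with rfl | hj <;> simp [Pi.single_apply, *]
  calc f x = f (∑ i, x i • (Pi.single i 1 : Fin N → ℝ)) := by rw [← hx]
    _ ≤ ∑ i, f (x i • (Pi.single i 1 : Fin N → ℝ)) := fsum_le h _ _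
    _ = ∑ i, |x i| * f (Pi.single i 1) := by simp [h.2.1]
    _ ≤ ∑ i, ‖x‖ * f (Pi.single i 1) := by
        apply Finset.sum_le_sum; intro i _
        exact mul_le_mul_of_nonneg_right (by simpa using norm_le_pi_norm x i) (fnonneg h _)
    _ = (∑ i, f (Pi.single i 1)) * ‖x‖ := by rw [Finset.sum_mul]; exact Finset.sum_congr rfl fun i _ => mul_comm _ _

lemma fcont (h : IsNormOn f) : Continuous f := by
  have key : ∀ x y : Fin N → ℝ, dist (f x) (f y) ≤ ((∑ i, f (Pi.single i 1)) * dist x y) := by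
    intro x y
    have h1 : f x ≤ f (x - y) + f y := by
      have := h.2.2 (x - y) y; simpa using this
    have h2 : f y ≤ f (y - x) + f x := by
      have := h.2.2 (y - x) x; simpa using this
    have h3 : f (y - x) = f (x - y) := by rw [← fneg h (x - y)]; congr 1; abel
    have h4 : f (x - y) ≤ (∑ i, f (Pi.single i 1)) * ‖x - y‖ := f_le_norm h _
    rw [Real.dist_eq, dist_eq_norm]
    rw [abs_le]; constructor <;> nlinarith [fnonneg h (x - y)]
  have : LipschitzWith (Real.toNNReal (∑ i, f (Pi.single i 1))) f := by
    apply LipschitzWith.of_dist_le_mul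
    intro x y
    refine le_trans (key x y) ?_
    gcongr
    exact Real.le_coe_toNNReal _
  exact this.continuous

lemma exists_lower (h : IsNormOn f) : ∃ c > 0, ∀ x : Fin N → ℝ, c * ‖x‖ ≤ f x := by
  rcases Nat.eq_zero_or_pos N with hN | hN
  · refine ⟨1, one_pos, fun x => ?_⟩
    subst hN
    have hx0 : x = 0 := Subsingleton.elim x 0
    rw [hx0, fzero h, norm_zero, mul_zero]
  · have hS : IsCompact (Metric.sphere (0 : Fin N → ℝ) 1) := isCompact_sphere 0 1
    haveI : Nonempty (Fin N) := ⟨⟨0, hN⟩⟩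
    have hSne : (Metric.sphere (0 : Fin N → ℝ) 1).Nonempty := by
      exact NormedSpace.sphere_nonempty.2 zero_le_one
    obtain ⟨x₀, hx₀, hmin⟩ := hS.exists_isMinOn hSne (fcont h).continuousOn
    have hx₀1 : ‖x₀‖ = 1 := by simpa using hx₀
    have hc : 0 < f x₀ := by
      rcases (fnonneg h x₀).lt_or_eq with h' | h'
      · exact h'
      · exfalso
        have : x₀ = 0 := (h.1 x₀).1 h'.symm
        rw [this] at hx₀1; simp at hx₀1
    refine ⟨f x₀, hc, fun x => ?_⟩
    rcases eq_or_ne x 0 with rfl | hx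
    · simp [fzero h]
    · have hnx : (0:ℝ) < ‖x‖ := norm_pos_iff.2 hx
      have hmem : (‖x‖⁻¹ • x) ∈ Metric.sphere (0 : Fin N → ℝ) 1 := by
        simp [norm_smul, abs_of_pos (inv_pos.2 hnx), inv_mul_cancel₀ hnx.ne']
      have := hmin hmem
      have hval : f (‖x‖⁻¹ • x) = ‖x‖⁻¹ * f x := by
        rw [h.2.1, abs_of_pos (inv_pos.2 hnx)]
      simp only [IsMinOn, IsMinFilter] at this
      have h5 : f x₀ ≤ ‖x‖⁻¹ * f x := by rw [← hval]; exact this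
      calc f x₀ * ‖x‖ ≤ (‖x‖⁻¹ * f x) * ‖x‖ := by nlinarith
        _ = f x := by field_simp



variable {N : ℕ} {f : (Fin N → ℝ) → ℝ}

lemma apply_eq_sum (a : (Fin N → ℝ) →ₗ[ℝ] ℝ) (x : Fin N → ℝ) :
    a x = ∑ i, x i * a (Pi.single i 1) := by
  classical
  rw [LinearMap.pi_apply_eq_sum_univ a x]
  refine Finset.sum_congr rfl fun i _ => ?_
  rw [smul_eq_mul]
  congr 2
  funext j
  simp [Pi.single_apply, eq_comm]

lemma abs_apply_le (a : (Fin N → ℝ) →ₗ[ℝ] ℝ) (x : Fin N → ℝ) :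
    |a x| ≤ ∑ i, |x i| * |a (Pi.single i 1)| := by
  rw [apply_eq_sum a x]
  refine le_trans (Finset.abs_sum_le_sum_abs _ _) ?_
  simp [abs_mul, le_refl]

lemma dual_set_nonempty (h : IsNormOn f) (a : (Fin N → ℝ) →ₗ[ℝ] ℝ) :
    {s : ℝ | ∃ x, f x ≤ 1 ∧ s = |a x|}.Nonempty :=
  ⟨|a 0|, 0, by rw [fzero h]; exact zero_le_one, rfl⟩

lemma dual_set_bddAbove (h : IsNormOn f) {c : ℝ} (hc : 0 < c)
    (hlow : ∀ x, c * ‖x‖ ≤ f x) (a : (Fin N → ℝ) →ₗ[ℝ] ℝ) :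
    BddAbove {s : ℝ | ∃ x, f x ≤ 1 ∧ s = |a x|} := by
  refine ⟨(1/c) * ∑ i, |a (Pi.single i 1)|, ?_⟩
  rintro s ⟨x, hx, rfl⟩
  have hxn : ‖x‖ ≤ 1/c := by
    rw [le_div_iff₀ hc] at *
    nlinarith [hlow x]
  refine le_trans (abs_apply_le a x) ?_
  rw [Finset.mul_sum]
  refine Finset.sum_le_sum fun i _ => ?_
  exact mul_le_mul_of_nonneg_right (le_trans (by simpa using norm_le_pi_norm x i) hxn) (abs_nonneg _)

lemma dual_le (h : IsNormOn f) {c : ℝ} (hc : 0 < c) (hlow : ∀ x, c * ‖x‖ ≤ f x)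
    (a : (Fin N → ℝ) →ₗ[ℝ] ℝ) (hd : dualNormF f a = 1) (x : Fin N → ℝ) :
    |a x| ≤ f x := by
  rcases (fnonneg h x).lt_or_eq with hfx | hfx
  · have hmem : |a ((f x)⁻¹ • x)| ∈ {s : ℝ | ∃ y, f y ≤ 1 ∧ s = |a y|} := by
      refine ⟨(f x)⁻¹ • x, ?_, rfl⟩
      rw [h.2.1, abs_of_pos (inv_pos.2 hfx), inv_mul_cancel₀ hfx.ne']
    have hd' : sSup {s : ℝ | ∃ x, f x ≤ 1 ∧ s = |a x|} = 1 := hd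
    have := le_csSup (dual_set_bddAbove h hc hlow a) hmem
    rw [hd'] at this
    rw [map_smul, smul_eq_mul, abs_mul, abs_of_pos (inv_pos.2 hfx)] at this
    calc |a x| = f x * ((f x)⁻¹ * |a x|) := by field_simp
      _ ≤ f x * 1 := by nlinarith
      _ = f x := mul_one _
  · have hx0 : x = 0 := (h.1 x).1 hfx.symm
    rw [hx0]; simp [fzero h]


end Aux

open Filter Topology

set_option maxHeartbeats 2000000 in
/-- Let `f` be a norm on `ℝ^N`.  For every `ε > 0` there is `δ > 0` such that for every
functional `a` in the unit sphere of the dual of `(ℝ^N, f)` there exists a functional `b`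
in the dual unit sphere such that: (1) every `a` in the `f`-unit sphere with
`a* a > 1 - δ` is at `f`-distance less than `ε` from the set
`F(b) = {y : f y = 1 ∧ b y = 1}`; and (2) `b (e i) = 0` whenever `a (e i) = 0`. -/
theorem stmt11 {N : ℕ} (f : (Fin N → ℝ) → ℝ) (hnorm : IsNormOn f)
    (ε : ℝ) (hε : 0 < ε) :
    ∃ δ : ℝ, 0 < δ ∧
      ∀ a : (Fin N → ℝ) →ₗ[ℝ] ℝ, dualNormF f a = 1 →
        ∃ b : (Fin N → ℝ) →ₗ[ℝ] ℝ, dualNormF f b = 1 ∧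
          (∀ x, f x = 1 → 1 - δ < a x → ∃ y, f y = 1 ∧ b y = 1 ∧ f (x - y) < ε) ∧
          (∀ i, a (Pi.single i 1) = 0 → b (Pi.single i 1) = 0) := by
  classical
  obtain ⟨c, hc, hlow⟩ := exists_lower hnorm
  by_contra hcon
  have key : ∀ n : ℕ, ∃ a : (Fin N → ℝ) →ₗ[ℝ] ℝ, dualNormF f a = 1 ∧
      ∀ b : (Fin N → ℝ) →ₗ[ℝ] ℝ, dualNormF f b = 1 →
        (∀ i, a (Pi.single i 1) = 0 → b (Pi.single i 1) = 0) →
        ∃ x, f x = 1 ∧ 1 - 1/((n:ℝ)+1) < a x ∧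
          ∀ y, f y = 1 → b y = 1 → ε ≤ f (x - y) := by
    intro n
    by_contra hk
    push_neg at hk
    apply hcon
    refine ⟨1/((n:ℝ)+1), by positivity, ?_⟩
    intro a ha
    obtain ⟨b, hb1, hb2, hb3⟩ := hk a ha
    exact ⟨b, hb1, hb3, hb2⟩
  choose a ha hA using key
  -- coefficient vectors
  set v : ℕ → (Fin N → ℝ) := fun n i => a n (Pi.single i 1) with hv
  have hvbdd : ∀ n, v n ∈ Metric.closedBall (0 : Fin N → ℝ) (∑ i, f (Pi.single i 1)) := by
    intro n
    rw [Metric.mem_closedBall, dist_zero_right]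
    refine pi_norm_le_iff_of_nonneg (Finset.sum_nonneg fun i _ => fnonneg hnorm _) |>.2 fun i => ?_
    calc ‖v n i‖ ≤ f (Pi.single i 1) := dual_le hnorm hc hlow (a n) (ha n) _
      _ ≤ ∑ j, f (Pi.single j 1) := Finset.single_le_sum (f := fun j => f (Pi.single j 1)) (fun j _ => fnonneg hnorm _) (Finset.mem_univ i)
  obtain ⟨w, -, φ, hφ, hw⟩ := (isCompact_closedBall (0 : Fin N → ℝ) _).tendsto_subseq hvbdd
  -- coordinatewise convergence
  have hvi : ∀ i, Tendsto (fun n => a (φ n) (Pi.single i 1)) atTop (𝓝 (w i)) := by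
    intro i
    exact ((continuous_apply i).continuousAt.tendsto).comp hw
  -- the limit functional
  set A : (Fin N → ℝ) →ₗ[ℝ] ℝ := ∑ i, w i • LinearMap.proj i with hA'
  have hAx : ∀ x, A x = ∑ i, x i * w i := by
    intro x
    rw [hA', LinearMap.sum_apply]
    refine Finset.sum_congr rfl fun i _ => ?_
    rw [LinearMap.smul_apply, LinearMap.proj_apply, smul_eq_mul, mul_comm]
  have hAe : ∀ i, A (Pi.single i 1) = w i := by
    intro i
    rw [hAx]
    rw [Finset.sum_eq_single i (fun j _ hj => by simp [Pi.single_apply, hj]) (by simp)]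
    simp
  -- pointwise convergence  a (φ n) x → A x
  have hax : ∀ x, Tendsto (fun n => a (φ n) x) atTop (𝓝 (A x)) := by
    intro x
    have : ∀ n, a (φ n) x = ∑ i, x i * v (φ n) i := fun n => apply_eq_sum _ _
    simp only [this, hAx]
    exact tendsto_finset_sum _ fun i _ => (tendsto_const_nhds.mul (hvi i))
  -- |A x| ≤ f x
  have hAle : ∀ x, |A x| ≤ f x := by
    intro x
    refine le_of_tendsto ((hax x).abs) (Eventually.of_forall fun n => ?_)
    exact dual_le hnorm hc hlow _ (ha _) x
  -- dualNormF f A = 1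
  have hAd : dualNormF f A = 1 := by
    show sSup {s : ℝ | ∃ x, f x ≤ 1 ∧ s = |A x|} = 1
    refine le_antisymm (csSup_le (dual_set_nonempty hnorm A) ?_) ?_
    · rintro s ⟨x, hx, rfl⟩
      exact le_trans (hAle x) hx
    · by_contra hlt
      push_neg at hlt
      set η : ℝ := 1 - sSup {s : ℝ | ∃ x, f x ≤ 1 ∧ s = |A x|} with hη
      have hηpos : 0 < η := by rw [hη]; linarith
      -- error term tends to zero
      have herr : Tendsto (fun n => ∑ i, |a (φ n) (Pi.single i 1) - w i|) atTop (𝓝 0) := by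
        have : Tendsto (fun n => ∑ i : Fin N, |a (φ n) (Pi.single i 1) - w i|) atTop
            (𝓝 (∑ i : Fin N, (0:ℝ))) := by
          refine tendsto_finset_sum _ fun i _ => ?_
          have h0 : Tendsto (fun n => (a (φ n)) (Pi.single i 1) - w i) atTop (𝓝 (w i - w i)) :=
            (hvi i).sub tendsto_const_nhds
          rw [sub_self] at h0
          simpa using h0.abs
        simpa using this
      obtain ⟨n, hn⟩ := (herr.eventually (gt_mem_nhds (by positivity : (0:ℝ) < c * η / 2))).exists
      -- pick a near-norming point for a (φ n)
      have hsup : (1 : ℝ) - η/2 < sSup {s : ℝ | ∃ x, f x ≤ 1 ∧ s = |a (φ n) x|} := by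
        have : sSup {s : ℝ | ∃ x, f x ≤ 1 ∧ s = |a (φ n) x|} = 1 := ha (φ n)
        rw [this]; linarith
      obtain ⟨s, ⟨x, hx1, rfl⟩, hs⟩ := exists_lt_of_lt_csSup (dual_set_nonempty hnorm _) hsup
      -- compare A x with a (φ n) x
      have hxc : ∀ i, |x i| ≤ 1/c := by
        intro i
        have h1 : c * ‖x‖ ≤ 1 := le_trans (hlow x) hx1
        have h2 : |x i| ≤ ‖x‖ := by simpa using norm_le_pi_norm x i
        rw [le_div_iff₀ hc]
        nlinarith [norm_nonneg x]
      have hdiff : |A x - a (φ n) x| ≤ (1/c) * ∑ i, |a (φ n) (Pi.single i 1) - w i| := by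
        rw [hAx, apply_eq_sum (a (φ n)) x, ← Finset.sum_sub_distrib]
        refine le_trans (Finset.abs_sum_le_sum_abs _ _) ?_
        rw [Finset.mul_sum]
        refine Finset.sum_le_sum fun i _ => ?_
        rw [← mul_sub, abs_mul, abs_sub_comm]
        exact mul_le_mul_of_nonneg_right (hxc i) (abs_nonneg _)
      have hAx_big : 1 - η < |A x| := by
        have h1 : |a (φ n) x| - |A x - a (φ n) x| ≤ |A x| := by
          have := abs_sub_abs_le_abs_sub (a (φ n) x) (A x)
          rw [abs_sub_comm] at this
          linarith
        have h2 : (1/c) * ∑ i, |a (φ n) (Pi.single i 1) - w i| < η/2 := by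
          rw [div_mul_eq_mul_div, one_mul, div_lt_iff₀ hc]
          calc ∑ i, |a (φ n) (Pi.single i 1) - w i| < c * η / 2 := hn
            _ = η / 2 * c := by ring
        linarith
      have hmem : |A x| ∈ {s : ℝ | ∃ x, f x ≤ 1 ∧ s = |A x|} := ⟨x, hx1, rfl⟩
      have := le_csSup (dual_set_bddAbove hnorm hc hlow A) hmem
      rw [hη] at hAx_big
      linarith
  -- eventually the zero condition holds for A against a (φ n)
  have hevzero : ∀ᶠ n in atTop, ∀ i, a (φ n) (Pi.single i 1) = 0 → A (Pi.single i 1) = 0 := by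
    rw [eventually_all]
    intro i
    rcases eq_or_ne (w i) 0 with hwi | hwi
    · exact Eventually.of_forall fun n _ => by rw [hAe i, hwi]
    · exact ((hvi i).eventually_ne hwi).mono fun n hn h0 => absurd h0 hn
  obtain ⟨n₀, hn₀⟩ := eventually_atTop.1 hevzero
  -- choose the bad points
  have hxex : ∀ n : ℕ, ∃ x, f x = 1 ∧ 1 - 1/((φ (n₀ + n) : ℝ)+1) < a (φ (n₀ + n)) x ∧
      ∀ y, f y = 1 → A y = 1 → ε ≤ f (x - y) :=
    fun n => hA (φ (n₀ + n)) A hAd (hn₀ (n₀ + n) (Nat.le_add_right _ _))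
  choose x hx1 hx2 hx3 using hxex
  -- the points are bounded
  have hxbdd : ∀ n, x n ∈ Metric.closedBall (0 : Fin N → ℝ) (1/c) := by
    intro n
    rw [Metric.mem_closedBall, dist_zero_right, le_div_iff₀ hc, mul_comm]
    rw [← hx1 n]
    exact hlow _
  obtain ⟨z, -, σ, hσ, hz⟩ := (isCompact_closedBall (0 : Fin N → ℝ) _).tendsto_subseq hxbdd
  -- f z = 1
  have hfz : f z = 1 := by
    have h1 : Tendsto (fun n => f (x (σ n))) atTop (𝓝 (f z)) :=
      ((fcont hnorm).continuousAt.tendsto).comp hz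
    have h2 : Tendsto (fun n => f (x (σ n))) atTop (𝓝 1) := by
      simp only [hx1]; exact tendsto_const_nhds
    exact tendsto_nhds_unique h1 h2
  -- the index sequence tends to infinity
  have hidx : Tendsto (fun n => φ (n₀ + σ n)) atTop atTop := by
    refine (hφ.tendsto_atTop).comp ?_
    exact tendsto_atTop_mono (fun n => Nat.le_add_left (σ n) n₀) hσ.tendsto_atTop
  -- A z = 1
  have hAz : A z = 1 := by
    set g : ℕ → ℝ := fun n => a (φ (n₀ + σ n)) (x (σ n)) with hg
    have hgA : Tendsto g atTop (𝓝 (A z)) := by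
      have hform : g = fun n => ∑ i, x (σ n) i * a (φ (n₀ + σ n)) (Pi.single i 1) :=
        funext fun n => apply_eq_sum _ _
      rw [hform, hAx]
      refine tendsto_finset_sum _ fun i _ => ?_
      have hxi : Tendsto (fun n => x (σ n) i) atTop (𝓝 (z i)) :=
        ((continuous_apply i).continuousAt.tendsto).comp hz
      have hwi : Tendsto (fun n => a (φ (n₀ + σ n)) (Pi.single i 1)) atTop (𝓝 (w i)) := by
        have : Tendsto (fun m => a (φ m) (Pi.single i 1)) atTop (𝓝 (w i)) := hvi i
        exact this.comp (tendsto_atTop_mono (fun n => Nat.le_add_left (σ n) n₀) hσ.tendsto_atTop)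
      exact hxi.mul hwi
    have hg1 : Tendsto g atTop (𝓝 1) := by
      have hlo : Tendsto (fun n => 1 - 1/((φ (n₀ + σ n) : ℝ)+1)) atTop (𝓝 1) := by
        have h0 : Tendsto (fun m : ℕ => 1/((m : ℝ)+1)) atTop (𝓝 0) :=
          tendsto_one_div_add_atTop_nhds_zero_nat
        have := (h0.comp hidx).const_sub 1
        simpa using this
      refine tendsto_of_tendsto_of_tendsto_of_le_of_le hlo tendsto_const_nhds
        (fun n => le_of_lt (hx2 (σ n))) (fun n => ?_)
      calc g n ≤ |g n| := le_abs_self _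
        _ ≤ f (x (σ n)) := dual_le hnorm hc hlow _ (ha _) _
        _ = 1 := hx1 (σ n)
    exact tendsto_nhds_unique hgA hg1
  -- contradiction: ε ≤ f (x (σ n) - z) → 0
  have hfar : ∀ n, ε ≤ f (x (σ n) - z) := fun n => hx3 (σ n) z hfz hAz
  have htend0 : Tendsto (fun n => f (x (σ n) - z)) atTop (𝓝 0) := by
    have h1 : Tendsto (fun n => x (σ n) - z) atTop (𝓝 (z - z)) := hz.sub tendsto_const_nhds
    rw [sub_self] at h1
    have := ((fcont hnorm).continuousAt.tendsto).comp h1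
    rw [fzero hnorm] at this
    exact this
  have : ε ≤ 0 := ge_of_tendsto htend0 (Eventually.of_forall hfar)
  linarith
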